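/- Under the standing assumptions on X and F, convexity of F(·,ξ), i.i.d. sampling across replications, and the outer-approximation and termination conditions of the cutting-plane algorithm with tolerance ε₁, suppose ε ≤ ε₁ and set τ₁ = ε₁ − ε. Then inf_{x ∈ X*_ε} ‖(1/m) Σ_{j=1}^m x̂_n(ξ^n_j) − x‖ ≤ ( ( τ₁ + (2/m) Σ_{j=1}^m δ_n^f(ξ^n_j) ) / ε )·D_X. -/

import Mathlib

open MeasureTheory
open scoped RealInnerProductSpace

noncomputable section

/-- Lemma 4.1: under the outer-approximation and termination conditions of a
cutting-plane-type algorithm with tolerance `ε₁ ≥ ε`, the distance of the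
average of the candidate solutions to the ε-optimal set of the true problem is
bounded by `((τ₁ + (2/m) Σⱼ δₙᶠ(ξⁿⱼ)) / ε) · D_X`, where `τ₁ = ε₁ − ε`. -/
theorem cutting_plane_average_distance_to_true_eps_optimal_set
    {p d m n : ℕ} (hm : 1 ≤ m) (hn : 1 ≤ n)
    (X : Set (EuclideanSpace ℝ (Fin p))) (Ξ : Set (EuclideanSpace ℝ (Fin d)))
    (hXne : X.Nonempty) (hXcomp : IsCompact X) (hXconv : Convex ℝ X)
    (F : EuclideanSpace ℝ (Fin p) → EuclideanSpace ℝ (Fin d) → ℝ)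
    (hFcont : ∀ ζ ∈ Ξ, ContinuousOn (fun x => F x ζ) X)
    (hFmeas : ∀ x ∈ X, Measurable (F x))
    (LF γ : ℝ) (hLF : 0 < LF) (hγ : 0 < γ) (hγ1 : γ ≤ 1)
    (hHolder : ∀ x ∈ X, ∀ y ∈ X, ∀ ζ ∈ Ξ, |F x ζ - F y ζ| ≤ LF * ‖x - y‖ ^ γ)
    (MF : ℝ) (hMF : ∀ x ∈ X, ∀ ζ ∈ Ξ, |F x ζ| < MF)
    (hFconvex : ∀ ζ ∈ Ξ, ConvexOn ℝ X fun x => F x ζ)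
    -- the distribution `μ` of `ξ̃` on `Ξ`, the true objective `f`, and `θ*`
    (μ : Measure (EuclideanSpace ℝ (Fin d))) [IsProbabilityMeasure μ]
    (hμΞ : ∀ᵐ z ∂μ, z ∈ Ξ)
    (f : EuclideanSpace ℝ (Fin p) → ℝ) (hf : ∀ x, f x = ∫ z, F x z ∂μ)
    (θstar : ℝ) (hθstar : θstar = sInf (f '' X))
    -- the samples and SAA objectives of the `m` replications
    (ξ : Fin m → Fin n → EuclideanSpace ℝ (Fin d)) (hξΞ : ∀ i j, ξ i j ∈ Ξ)
    (fn : Fin m → EuclideanSpace ℝ (Fin p) → ℝ)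
    (hfn : ∀ i x, fn i x = (1 / n : ℝ) * ∑ j, F x (ξ i j))
    (δ : Fin m → ℝ) (hδ : ∀ i, δ i = sSup ((fun x => |fn i x - f x|) '' X))
    -- Condition 1 (outer approximation): each `f̂ₙ(·;ξⁿᵢ)` is a convex
    -- piecewise-linear function minorizing `fₙ(·;ξⁿᵢ)` on `X`
    (fhat : Fin m → EuclideanSpace ℝ (Fin p) → ℝ)
    (k : Fin m → ℕ) (hk : ∀ i, 1 ≤ k i)
    (α : (i : Fin m) → Fin (k i) → ℝ)
    (β : (i : Fin m) → Fin (k i) → EuclideanSpace ℝ (Fin p))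
    (hPL : ∀ i x, fhat i x = ⨆ ℓ : Fin (k i), (α i ℓ + ⟪β i ℓ, x⟫))
    (houter : ∀ i, ∀ x ∈ X, fhat i x ≤ fn i x)
    -- minimizers of the approximations, and Condition 2 (termination)
    (xhat : Fin m → EuclideanSpace ℝ (Fin p))
    (hxhat : ∀ i, xhat i ∈ X ∧ IsMinOn (fhat i) X (xhat i))
    (ε₁ : ℝ) (hε₁ : 0 < ε₁)
    (hterm : ∀ i, fn i (xhat i) - fhat i (xhat i) ≤ ε₁)
    (ε : ℝ) (hε : 0 < ε) (hεε₁ : ε ≤ ε₁)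
    (τ₁ : ℝ) (hτ₁ : τ₁ = ε₁ - ε)
    -- the average of the candidate solutions
    (xavg : EuclideanSpace ℝ (Fin p)) (hxavg : xavg = (m : ℝ)⁻¹ • ∑ j, xhat j)
    -- the ε-optimal set of the true problem
    (Xstar : Set (EuclideanSpace ℝ (Fin p)))
    (hXstar : Xstar = {x ∈ X | f x ≤ θstar + ε})
    (DX : ℝ) (hDX : DX = sSup (Set.image2 (fun x x' => ‖x - x'‖) X X)) :
    sInf ((fun x => ‖xavg - x‖) '' Xstar) ≤
      ((τ₁ + (2 / m : ℝ) * ∑ j, δ j) / ε) * DX := by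
  classical
  have hm0 : (0:ℝ) < m := by exact_mod_cast hm
  have hn0 : (0:ℝ) < n := by exact_mod_cast hn
  -- integrability of F x for x ∈ X
  have hbd : ∀ x ∈ X, ∀ᵐ z ∂μ, ‖F x z‖ ≤ MF := by
    intro x hx
    filter_upwards [hμΞ] with z hz
    exact le_of_lt (by simpa [Real.norm_eq_abs] using hMF x hx z hz)
  have hint : ∀ x ∈ X, Integrable (F x) μ := by
    intro x hx
    exact (integrable_const MF).mono' (hFmeas x hx).aestronglyMeasurable (hbd x hx)
  -- bound on f
  have hfb : ∀ x ∈ X, |f x| ≤ MF := by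
    intro x hx
    rw [hf]
    have := norm_integral_le_of_norm_le_const (μ := μ) (hbd x hx)
    simpa [Real.norm_eq_abs] using this
  -- bound on fn
  have hMF0 : 0 ≤ MF := by
    obtain ⟨x, hx⟩ := hXne
    exact (abs_nonneg _).trans (le_of_lt (hMF x hx _ (hξΞ ⟨0, hm⟩ ⟨0, hn⟩)))
  have hfnb : ∀ i, ∀ x ∈ X, |fn i x| ≤ MF := by
    intro i x hx
    rw [hfn]
    have h1 : |∑ j, F x (ξ i j)| ≤ ∑ j : Fin n, MF := by
      refine (Finset.abs_sum_le_sum_abs _ _).trans ?_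
      exact Finset.sum_le_sum fun j _ => le_of_lt (hMF x hx _ (hξΞ i j))
    have h2 : (∑ _j : Fin n, MF) = n * MF := by
      simp [Finset.sum_const, Finset.card_univ, mul_comm]
    rw [abs_mul, abs_of_nonneg (by positivity : (0:ℝ) ≤ 1 / n)]
    calc (1 / n : ℝ) * |∑ j, F x (ξ i j)| ≤ (1 / n : ℝ) * (n * MF) := by
          apply mul_le_mul_of_nonneg_left _ (by positivity)
          rw [← h2]; exact h1
      _ = MF := by field_simp
  -- δ bounds
  have hδbdd : ∀ i, BddAbove ((fun x => |fn i x - f x|) '' X) := by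
    intro i
    refine ⟨2 * MF, ?_⟩
    rintro v ⟨x, hx, rfl⟩
    calc |fn i x - f x| ≤ |fn i x| + |f x| := abs_sub _ _
      _ ≤ 2 * MF := by have := hfnb i x hx; have := hfb x hx; linarith
  have hδge : ∀ i, ∀ x ∈ X, |fn i x - f x| ≤ δ i := by
    intro i x hx
    rw [hδ]
    exact le_csSup (hδbdd i) ⟨x, hx, rfl⟩
  have hδ0 : ∀ i, 0 ≤ δ i := by
    intro i
    obtain ⟨x, hx⟩ := hXne
    exact (abs_nonneg _).trans (hδge i x hx)
  -- convexity of f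
  have hfconv : ConvexOn ℝ X f := by
    refine ⟨hXconv, fun x hx y hy a b ha hb hab => ?_⟩
    have hxy : a • x + b • y ∈ X := hXconv hx hy ha hb hab
    simp only [smul_eq_mul, hf]
    calc ∫ z, F (a • x + b • y) z ∂μ
        ≤ ∫ z, (a * F x z + b * F y z) ∂μ := by
          refine integral_mono_ae (hint _ hxy)
            (((hint x hx).const_mul a).add ((hint y hy).const_mul b)) ?_
          filter_upwards [hμΞ] with z hz
          simpa [smul_eq_mul] using (hFconvex z hz).2 hx hy ha hb hab
      _ = a * ∫ z, F x z ∂μ + b * ∫ z, F y z ∂μ := by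
          rw [integral_add ((hint x hx).const_mul a) ((hint y hy).const_mul b),
            integral_const_mul, integral_const_mul]
  -- Hölder continuity of f on X
  have hfH : ∀ x ∈ X, ∀ y ∈ X, |f x - f y| ≤ LF * ‖x - y‖ ^ γ := by
    intro x hx y hy
    have hsub : f x - f y = ∫ z, (F x z - F y z) ∂μ := by
      rw [hf, hf, integral_sub (hint x hx) (hint y hy)]
    rw [hsub]
    have h : ∀ᵐ z ∂μ, ‖F x z - F y z‖ ≤ LF * ‖x - y‖ ^ γ := by
      filter_upwards [hμΞ] with z hz
      simpa [Real.norm_eq_abs] using hHolder x hx y hy z hz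
    have := norm_integral_le_of_norm_le_const (μ := μ) h
    simpa [Real.norm_eq_abs] using this
  have hfc : ContinuousOn f X := by
    intro x₀ hx₀
    have h2 : Filter.Tendsto (fun x : EuclideanSpace ℝ (Fin p) => ‖x - x₀‖) (nhds x₀) (nhds 0) := by
      have : Continuous (fun x : EuclideanSpace ℝ (Fin p) => ‖x - x₀‖) :=
        (continuous_id.sub continuous_const).norm
      simpa using this.tendsto x₀
    have h3 : ContinuousAt (fun u : ℝ => u ^ γ) 0 :=
      Real.continuousAt_rpow_const 0 γ (Or.inr hγ.le)
    have h4 : Filter.Tendsto (fun x : EuclideanSpace ℝ (Fin p) => LF * ‖x - x₀‖ ^ γ)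
        (nhdsWithin x₀ X) (nhds 0) := by
      have := (h3.tendsto.comp h2).const_mul LF
      rw [Real.zero_rpow (ne_of_gt hγ)] at this
      simpa using this.mono_left nhdsWithin_le_nhds
    have h5 : Filter.Tendsto (fun x => f x - f x₀) (nhdsWithin x₀ X) (nhds 0) := by
      refine squeeze_zero_norm' ?_ h4
      filter_upwards [self_mem_nhdsWithin] with x hx
      simpa [Real.norm_eq_abs] using hfH x hx x₀ hx₀
    have := h5.add (tendsto_const_nhds (x := f x₀))
    exact (by simpa using this : Filter.Tendsto f (nhdsWithin x₀ X) (nhds (f x₀)))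
  -- minimizer of f on X
  obtain ⟨xs, hxsX, hxsmin⟩ := hXcomp.exists_isMinOn hXne hfc
  have hθ : θstar = f xs := by
    rw [hθstar]
    refine IsLeast.csInf_eq ⟨⟨xs, hxsX, rfl⟩, ?_⟩
    rintro v ⟨x, hx, rfl⟩
    exact isMinOn_iff.mp hxsmin x hx
  -- xavg ∈ X and xavg as convex combination
  have hsum1 : (∑ _j : Fin m, (m:ℝ)⁻¹) = 1 := by
    simp [Finset.sum_const, Finset.card_univ]
    field_simp
  have hxavg' : xavg = ∑ j, (m:ℝ)⁻¹ • xhat j := by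
    rw [hxavg, Finset.smul_sum]
  have havgX : xavg ∈ X := by
    rw [hxavg']
    exact hXconv.sum_mem (fun i _ => by positivity) hsum1 (fun i _ => (hxhat i).1)
  -- key bound
  set t : ℝ := τ₁ + (2 / m : ℝ) * ∑ j, δ j with ht
  have ht0 : 0 ≤ t := by
    have h1 : 0 ≤ τ₁ := by rw [hτ₁]; linarith
    have h2 : 0 ≤ ∑ j, δ j := Finset.sum_nonneg fun j _ => hδ0 j
    have h3 : 0 ≤ (2 / m : ℝ) * ∑ j, δ j :=
      mul_nonneg (by positivity) h2
    rw [ht]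
    exact add_nonneg h1 h3
  have hrep : ∀ j, f (xhat j) ≤ f xs + ε₁ + 2 * δ j := by
    intro j
    have h1 : f (xhat j) - fn j (xhat j) ≤ δ j := by
      have := hδge j (xhat j) (hxhat j).1
      rw [abs_sub_comm] at this
      exact (le_abs_self _).trans this
    have h2 : fn j (xhat j) - fhat j (xhat j) ≤ ε₁ := hterm j
    have h3 : fhat j (xhat j) ≤ fhat j xs := isMinOn_iff.mp (hxhat j).2 xs hxsX
    have h4 : fhat j xs ≤ fn j xs := houter j xs hxsX
    have h5 : fn j xs - f xs ≤ δ j := (le_abs_self _).trans (hδge j xs hxsX)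
    linarith
  have hkey : f xavg ≤ f xs + ε + t := by
    have hJ : f xavg ≤ ∑ j, (m:ℝ)⁻¹ * f (xhat j) := by
      rw [hxavg']
      have := hfconv.map_sum_le (t := Finset.univ) (w := fun _ => (m:ℝ)⁻¹)
        (p := xhat) (fun i _ => by positivity) hsum1 (fun i _ => (hxhat i).1)
      simpa [smul_eq_mul] using this
    have hS : (∑ j, (m:ℝ)⁻¹ * f (xhat j)) ≤ ∑ j, (m:ℝ)⁻¹ * (f xs + ε₁ + 2 * δ j) :=
      Finset.sum_le_sum fun j _ => mul_le_mul_of_nonneg_left (hrep j) (by positivity)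
    have hS2 : (∑ j, (m:ℝ)⁻¹ * (f xs + ε₁ + 2 * δ j))
        = f xs + ε₁ + (2 / m : ℝ) * ∑ j, δ j := by
      simp only [mul_add, Finset.sum_add_distrib, Finset.sum_const, Finset.card_univ,
        Fintype.card_fin, nsmul_eq_mul, ← Finset.mul_sum]
      field_simp
      all_goals ring
    have heq : f xs + ε₁ + (2 / m : ℝ) * ∑ j, δ j = f xs + ε + t := by
      rw [ht, hτ₁]; ring
    calc f xavg ≤ ∑ j, (m:ℝ)⁻¹ * f (xhat j) := hJ
      _ ≤ ∑ j, (m:ℝ)⁻¹ * (f xs + ε₁ + 2 * δ j) := hS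
      _ = f xs + ε₁ + (2 / m : ℝ) * ∑ j, δ j := hS2
      _ = f xs + ε + t := heq
  -- construct the point y in Xstar
  have hεt : 0 < ε + t := by linarith
  set lam : ℝ := ε / (ε + t) with hlam
  have hlam0 : 0 ≤ lam := by positivity
  have hlam1 : lam ≤ 1 := by
    rw [hlam, div_le_one hεt]; linarith
  set y : EuclideanSpace ℝ (Fin p) := lam • xavg + (1 - lam) • xs with hy
  have hyX : y ∈ X := hXconv havgX hxsX hlam0 (by linarith) (by ring)
  have hfy : f y ≤ θstar + ε := by
    have hc := hfconv.2 havgX hxsX hlam0 (by linarith : (0:ℝ) ≤ 1 - lam) (by ring)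
    simp only [smul_eq_mul] at hc
    have h1 : lam * f xavg + (1 - lam) * f xs ≤ lam * (f xs + ε + t) + (1 - lam) * f xs :=
      by nlinarith [hkey]
    have h2 : lam * (f xs + ε + t) + (1 - lam) * f xs = f xs + lam * (ε + t) := by ring
    have h3 : lam * (ε + t) = ε := by
      rw [hlam]; field_simp
    rw [hθ]
    calc f y ≤ lam * f xavg + (1 - lam) * f xs := hc
      _ ≤ f xs + ε := by linarith [h1, h2, h3]
  have hyXstar : y ∈ Xstar := by
    simp only [hXstar, Set.mem_setOf_eq]
    exact ⟨hyX, hfy⟩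
  -- DX bounds
  have hDXbdd : BddAbove (Set.image2 (fun x x' : EuclideanSpace ℝ (Fin p)
      => ‖x - x'‖) X X) := by
    have hcomp : IsCompact ((fun q : EuclideanSpace ℝ (Fin p) × EuclideanSpace ℝ (Fin p)
        => ‖q.1 - q.2‖) '' (X ×ˢ X)) :=
      (hXcomp.prod hXcomp).image ((continuous_fst.sub continuous_snd).norm)
    rw [← Set.image_prod]
    exact hcomp.bddAbove
  have hDXle : ‖xavg - xs‖ ≤ DX := by
    rw [hDX]
    exact le_csSup hDXbdd (Set.mem_image2_of_mem havgX hxsX)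
  have hDX0 : 0 ≤ DX := (norm_nonneg _).trans hDXle
  -- distance bound
  have hdiff : xavg - y = (1 - lam) • (xavg - xs) := by
    rw [hy]; module
  have hnorm : ‖xavg - y‖ = (1 - lam) * ‖xavg - xs‖ := by
    rw [hdiff, norm_smul, Real.norm_eq_abs, abs_of_nonneg (by linarith : (0:ℝ) ≤ 1 - lam)]
  have h1lam : 1 - lam = t / (ε + t) := by
    rw [hlam]; field_simp; ring
  have hdist : ‖xavg - y‖ ≤ (t / ε) * DX := by
    rw [hnorm, h1lam]
    have hq : t / (ε + t) ≤ t / ε := by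
      apply div_le_div_of_nonneg_left ht0 hε
      linarith
    exact mul_le_mul hq hDXle (norm_nonneg _) (by positivity)
  -- conclude
  have hfinal : sInf ((fun x => ‖xavg - x‖) '' Xstar) ≤ ‖xavg - y‖ := by
    apply csInf_le
    · exact ⟨0, by rintro v ⟨x, _, rfl⟩; exact norm_nonneg _⟩
    · exact ⟨y, hyXstar, rfl⟩
  calc sInf ((fun x => ‖xavg - x‖) '' Xstar) ≤ ‖xavg - y‖ := hfinal
    _ ≤ (t / ε) * DX := hdist
    _ = ((τ₁ + (2 / m : ℝ) * ∑ j, δ j) / ε) * DX := by rw [ht]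

end
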